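/- Let Γ be a profinite group acting continuously on groups B and C, let f,g:B→C be Γ-equivariant group homomorphisms, assume h:B→C, h(y)=f(y)g(y)^{−1}, is surjective. For z∈C^Γ let Γ_z denote the intersection over all y∈h^{−1}({z}) of the stabilizer subgroups of y in Γ. Then for z,z'∈C^Γ, one has Γ_z=Γ_{z'} if and only if there exists y∈B fixed by every element of the product set Γ_zΓ_{z'} such that z'=f(y)·z·g(y)^{−1}. -/

import Mathlib

/-- **Proposition `lk`(c)**: with `Γ, B, C, f, g, h` as in Proposition `lk`(a), for
`z ∈ C^Γ` let `Γ_z` be the intersection of the stabilizers of all elements of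
`h⁻¹({z})`.  Then for `z, z' ∈ C^Γ` one has `Γ_z = Γ_{z'}` if and only if there exists a
`y ∈ B` fixed by every element of the product set `Γ_z·Γ_{z'}` such that
`z' = f(y)·z·g(y)⁻¹`. -/
theorem stmt3 {Γ B C : Type*} [Group Γ] [TopologicalSpace Γ] [IsTopologicalGroup Γ]
    [CompactSpace Γ] [TotallyDisconnectedSpace Γ] [T2Space Γ]
    [Group B] [Group C] [MulDistribMulAction Γ B] [MulDistribMulAction Γ C]
    (hBcont : ∀ b : B, IsOpen {σ : Γ | σ • b = b})
    (hCcont : ∀ c : C, IsOpen {σ : Γ | σ • c = c})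
    (f g : B →* C)
    (hf : ∀ (σ : Γ) (b : B), f (σ • b) = σ • f b)
    (hg : ∀ (σ : Γ) (b : B), g (σ • b) = σ • g b)
    (hsurj : ∀ c : C, ∃ y : B, f y * (g y)⁻¹ = c)
    (z z' : C) (hz : ∀ σ : Γ, σ • z = z) (hz' : ∀ σ : Γ, σ • z' = z') :
    ({σ : Γ | ∀ y : B, f y * (g y)⁻¹ = z → σ • y = y} =
        {σ : Γ | ∀ y : B, f y * (g y)⁻¹ = z' → σ • y = y}) ↔
      (∃ y : B,
        (∀ σ τ : Γ, (∀ w : B, f w * (g w)⁻¹ = z → σ • w = w) →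
          (∀ w : B, f w * (g w)⁻¹ = z' → τ • w = w) → (σ * τ) • y = y) ∧
        z' = f y * z * (g y)⁻¹) := by
  constructor
  · intro heq
    obtain ⟨w₀, hw₀⟩ := hsurj z
    obtain ⟨w₁, hw₁⟩ := hsurj z'
    refine ⟨w₁ * w₀⁻¹, ?_, ?_⟩
    · intro σ τ hσ hτ
      have hσ' : ∀ w : B, f w * (g w)⁻¹ = z' → σ • w = w :=
        (Set.ext_iff.mp heq σ).mp hσ
      have hτ' : ∀ w : B, f w * (g w)⁻¹ = z → τ • w = w :=
        (Set.ext_iff.mp heq τ).mpr hτ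
      rw [mul_smul, smul_mul', smul_inv', hτ w₁ hw₁, hτ' w₀ hw₀,
        smul_mul', smul_inv', hσ w₀ hw₀, hσ' w₁ hw₁]
    · rw [← hw₀, ← hw₁]
      simp only [map_mul, map_inv, mul_inv_rev, inv_inv]
      group
  · rintro ⟨y, hfix, hy⟩
    have hy1 : ∀ σ : Γ, (∀ w : B, f w * (g w)⁻¹ = z → σ • w = w) → σ • y = y := by
      intro σ hσ
      have := hfix σ 1 hσ (fun w _ => one_smul Γ w)
      simpa using this
    have hy2 : ∀ τ : Γ, (∀ w : B, f w * (g w)⁻¹ = z' → τ • w = w) → τ • y = y := by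
      intro τ hτ
      have := hfix 1 τ (fun w _ => one_smul Γ w) hτ
      simpa using this
    have hz2 : z = (f y)⁻¹ * z' * g y := by rw [hy]; group
    ext σ
    simp only [Set.mem_setOf_eq]
    constructor
    · intro hσ w' hw'
      have hw : f (y⁻¹ * w') * (g (y⁻¹ * w'))⁻¹ = z := by
        simp only [map_mul, map_inv, mul_inv_rev, inv_inv]
        rw [hz2, ← hw']
        group
      have h1 := hσ _ hw
      have h2 := hy1 σ hσ
      calc σ • w' = σ • (y * (y⁻¹ * w')) := by rw [mul_inv_cancel_left]
        _ = (σ • y) * (σ • (y⁻¹ * w')) := smul_mul' σ y (y⁻¹ * w')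
        _ = y * (y⁻¹ * w') := by rw [h1, h2]
        _ = w' := mul_inv_cancel_left y w'
    · intro hτ w hw
      have hw' : f (y * w) * (g (y * w))⁻¹ = z' := by
        simp only [map_mul, mul_inv_rev]
        rw [hy, ← hw]
        group
      have h1 := hτ _ hw'
      have h2 := hy2 σ hτ
      calc σ • w = y⁻¹ * ((σ • y) * (σ • w)) := by rw [h2, inv_mul_cancel_left]
        _ = y⁻¹ * (σ • (y * w)) := by rw [smul_mul']
        _ = y⁻¹ * (y * w) := by rw [h1]
        _ = w := inv_mul_cancel_left y w
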